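/- Let a ∈ ℝ and suppose that the Hardy inequality over (a,∞) holds with finite constant A⁺ and the Hardy inequality over (−∞,a) holds with finite constant A⁻ (for all F ∈ 𝓕). Then the Poincaré inequality holds with constant max(A⁺, A⁻): for every F ∈ 𝓕, ∫_ℝ (F(x) − m̄(F))² dm(x) ≤ max(A⁺, A⁻) · ∫_ℝ (dF/dS)²(t) dS(t). In particular the optimal Poincaré constant c_P satisfies c_P ≤ inf_a max(A⁺ₐ, A⁻ₐ). -/

import Mathlib

open MeasureTheory Set
open scoped ENNReal

/-- If the Hardy inequalities over `(a,∞)` and `(−∞,a)` hold with finite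
constants `A⁺` and `A⁻` respectively, then the Poincaré inequality holds with constant
`max(A⁺, A⁻)`: for every `F ∈ 𝓕`,
`∫_ℝ (F(x) − m̄(F))² dm ≤ max(A⁺,A⁻) · ∫_ℝ (dF/dS)² dS`.
(In particular the optimal Poincaré constant satisfies `c_P ≤ inf_a max(A⁺ₐ, A⁻ₐ)`.) -/
theorem poincare_from_hardy
    (S : ℝ → ℝ) (hScont : Continuous S) (hSmono : StrictMono S)
    (hStop : Filter.Tendsto S Filter.atTop Filter.atTop)
    (hSbot : Filter.Tendsto S Filter.atBot Filter.atBot)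
    (μS : Measure ℝ)
    (hμS : ∀ c d : ℝ, c ≤ d → μS (Ioc c d) = ENNReal.ofReal (S d - S c))
    (m : Measure ℝ) [IsFiniteMeasure m] (hm : m univ ≠ 0)
    (a : ℝ) (Aplus Aminus : ℝ)
    (hHardyPlus : ∀ F f : ℝ → ℝ, MemLp F 2 m → Integrable f μS → MemLp f 2 μS →
      (∀ c d : ℝ, c < d → F d - F c = ∫ t in Ioc c d, f t ∂μS) →
      ∫⁻ x in Ioi a, ENNReal.ofReal ((F x - F a) ^ 2) ∂m ≤
        ENNReal.ofReal Aplus * ∫⁻ t in Ioi a, ENNReal.ofReal (f t ^ 2) ∂μS)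
    (hHardyMinus : ∀ F f : ℝ → ℝ, MemLp F 2 m → Integrable f μS → MemLp f 2 μS →
      (∀ c d : ℝ, c < d → F d - F c = ∫ t in Ioc c d, f t ∂μS) →
      ∫⁻ x in Iio a, ENNReal.ofReal ((F x - F a) ^ 2) ∂m ≤
        ENNReal.ofReal Aminus * ∫⁻ t in Iio a, ENNReal.ofReal (f t ^ 2) ∂μS) :
    ∀ F f : ℝ → ℝ, MemLp F 2 m → Integrable f μS → MemLp f 2 μS →
      (∀ c d : ℝ, c < d → F d - F c = ∫ t in Ioc c d, f t ∂μS) →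
      ∫⁻ x, ENNReal.ofReal ((F x - (m univ).toReal⁻¹ * ∫ y, F y ∂m) ^ 2) ∂m ≤
        ENNReal.ofReal (max Aplus Aminus) * ∫⁻ t, ENNReal.ofReal (f t ^ 2) ∂μS := by

  intro F f hF hfInt hf2 hFf
  set M := (m univ).toReal with hM
  have hMpos : 0 < M := ENNReal.toReal_pos hm (measure_ne_top m univ)
  set c := F a with hc
  set mb := M⁻¹ * ∫ y, F y ∂m with hmb
  have hFi : Integrable F m := hF.integrable one_le_two
  have hF2i : Integrable (fun x => F x ^ 2) m := hF.integrable_sq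
  have key : ∀ b : ℝ, ∫ x, (F x - b) ^ 2 ∂m
      = (∫ x, F x ^ 2 ∂m) - 2 * b * (∫ x, F x ∂m) + b ^ 2 * M := by
    intro b
    have h1 : ∀ x, (F x - b) ^ 2 = (F x ^ 2 - 2 * b * F x) + b ^ 2 := by
      intro x; ring
    calc ∫ x, (F x - b) ^ 2 ∂m = ∫ x, ((F x ^ 2 - 2 * b * F x) + b ^ 2) ∂m := by
          simp_rw [h1]
      _ = (∫ x, (F x ^ 2 - 2 * b * F x) ∂m) + ∫ _x, (b ^ 2 : ℝ) ∂m :=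
          integral_add (hF2i.sub (hFi.const_mul (2 * b))) (integrable_const _)
      _ = ((∫ x, F x ^ 2 ∂m) - ∫ x, 2 * b * F x ∂m) + ∫ _x, (b ^ 2 : ℝ) ∂m := by
          rw [integral_sub hF2i (hFi.const_mul (2 * b))]
      _ = (∫ x, F x ^ 2 ∂m) - 2 * b * (∫ x, F x ∂m) + b ^ 2 * M := by
          rw [integral_const_mul, integral_const, smul_eq_mul, measureReal_def, ← hM]; ring
  have hI0 : mb * M = ∫ x, F x ∂m := by
    rw [hmb]; field_simp
  have hreal : ∫ x, (F x - mb) ^ 2 ∂m ≤ ∫ x, (F x - c) ^ 2 ∂m := by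
    rw [key, key, ← hI0]
    nlinarith [mul_nonneg hMpos.le (sq_nonneg (c - mb))]
  have hint : ∀ b : ℝ, Integrable (fun x => (F x - b) ^ 2) m := fun b =>
    (hF.sub (memLp_const b)).integrable_sq
  have L : ∀ b : ℝ, ∫⁻ x, ENNReal.ofReal ((F x - b) ^ 2) ∂m
      = ENNReal.ofReal (∫ x, (F x - b) ^ 2 ∂m) := fun b =>
    (ofReal_integral_eq_lintegral_ofReal (hint b)
      (Filter.Eventually.of_forall fun x => sq_nonneg _)).symm
  have step1 : ∫⁻ x, ENNReal.ofReal ((F x - mb) ^ 2) ∂m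
      ≤ ∫⁻ x, ENNReal.ofReal ((F x - c) ^ 2) ∂m := by
    rw [L, L]; exact ENNReal.ofReal_le_ofReal hreal
  set g : ℝ → ℝ≥0∞ := fun x => ENNReal.ofReal ((F x - c) ^ 2) with hg
  have hga : g a = 0 := by simp [hg, hc]
  have hsplit : ∫⁻ x, g x ∂m
      = (∫⁻ x in Iio a, g x ∂m) + ∫⁻ x in Ioi a, g x ∂m := by
    have h1 : (∫⁻ x in Iic a, g x ∂m) + ∫⁻ x in Ioi a, g x ∂m = ∫⁻ x, g x ∂m := by
      rw [← compl_Iic]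
      exact lintegral_add_compl g measurableSet_Iic
    have h2 : ∫⁻ x in Iic a, g x ∂m = ∫⁻ x in Iio a, g x ∂m := by
      have e1 : ∫⁻ x in Iio a ∪ {a}, g x ∂m
          = (∫⁻ x in Iio a, g x ∂m) + ∫⁻ x in ({a} : Set ℝ), g x ∂m :=
        lintegral_union (measurableSet_singleton a) (by simp)
      have e2 : ∫⁻ x in ({a} : Set ℝ), g x ∂m = 0 := by
        rw [Measure.restrict_singleton, lintegral_smul_measure, lintegral_dirac, hga,
          smul_zero]
      rw [← Iio_union_right, e1, e2, add_zero]
    rw [← h1, h2]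
  have hmax : ∀ A : ℝ, A ≤ max Aplus Aminus →
      ∀ X : ℝ≥0∞, ENNReal.ofReal A * X ≤ ENNReal.ofReal (max Aplus Aminus) * X :=
    fun A hA X => mul_le_mul_left (ENNReal.ofReal_le_ofReal hA) X
  have hplus := hHardyPlus F f hF hfInt hf2 hFf
  have hminus := hHardyMinus F f hF hfInt hf2 hFf
  calc ∫⁻ x, ENNReal.ofReal ((F x - mb) ^ 2) ∂m
      ≤ ∫⁻ x, g x ∂m := step1
    _ = (∫⁻ x in Iio a, g x ∂m) + ∫⁻ x in Ioi a, g x ∂m := hsplit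
    _ ≤ ENNReal.ofReal Aminus * (∫⁻ t in Iio a, ENNReal.ofReal (f t ^ 2) ∂μS)
        + ENNReal.ofReal Aplus * (∫⁻ t in Ioi a, ENNReal.ofReal (f t ^ 2) ∂μS) :=
        add_le_add hminus hplus
    _ ≤ ENNReal.ofReal (max Aplus Aminus) * (∫⁻ t in Iio a, ENNReal.ofReal (f t ^ 2) ∂μS)
        + ENNReal.ofReal (max Aplus Aminus) * (∫⁻ t in Ioi a, ENNReal.ofReal (f t ^ 2) ∂μS) :=
        add_le_add (hmax _ (le_max_right _ _) _) (hmax _ (le_max_left _ _) _)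
    _ = ENNReal.ofReal (max Aplus Aminus) *
        ((∫⁻ t in Iio a, ENNReal.ofReal (f t ^ 2) ∂μS)
          + ∫⁻ t in Ioi a, ENNReal.ofReal (f t ^ 2) ∂μS) := by ring
    _ ≤ ENNReal.ofReal (max Aplus Aminus) * ∫⁻ t, ENNReal.ofReal (f t ^ 2) ∂μS := by
        refine mul_le_mul_right ?_ _
        have e3 : (∫⁻ t in Iio a, ENNReal.ofReal (f t ^ 2) ∂μS)
            + ∫⁻ t in Ioi a, ENNReal.ofReal (f t ^ 2) ∂μS
            = ∫⁻ t in Iio a ∪ Ioi a, ENNReal.ofReal (f t ^ 2) ∂μS :=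
          (lintegral_union measurableSet_Ioi
            (Set.disjoint_left.mpr fun x hx1 hx2 => lt_asymm hx1 hx2)).symm
        rw [e3]
        calc ∫⁻ t in Iio a ∪ Ioi a, ENNReal.ofReal (f t ^ 2) ∂μS
            ≤ ∫⁻ t in (univ : Set ℝ), ENNReal.ofReal (f t ^ 2) ∂μS :=
              lintegral_mono_set (subset_univ _)
          _ = ∫⁻ t, ENNReal.ofReal (f t ^ 2) ∂μS := by rw [Measure.restrict_univ]
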